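/- The kernel of the homomorphism Φ is {1, -1}: an element p ∈ Spin(3,1) satisfies p·q·(hat(p))⁻¹ = q for all q ∈ V = {q ∈ H^C : q = -hat(conj(q))} if and only if p = 1 or p = -1. -/

import Mathlib

open Quaternion

noncomputable section

/-- The "hat" involution on complexified quaternions: complex-conjugate each coefficient. -/
def hatQ (q : ℍ[ℂ]) : ℍ[ℂ] :=
  ⟨(starRingEnd ℂ) q.re, (starRingEnd ℂ) q.imI, (starRingEnd ℂ) q.imJ, (starRingEnd ℂ) q.imK⟩

/-- Quaternionic conjugation: negate the I, J, K components. -/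
def conjQ (q : ℍ[ℂ]) : ℍ[ℂ] := ⟨q.re, -q.imI, -q.imJ, -q.imK⟩

/-- The complex bilinear form H(q,q') = q1q1' + q2q2' + q3q3' + q4q4'. -/
def Hform (p q : ℍ[ℂ]) : ℂ := p.re * q.re + p.imI * q.imI + p.imJ * q.imJ + p.imK * q.imK

def Iq : ℍ[ℂ] := ⟨0,1,0,0⟩
def Jq : ℍ[ℂ] := ⟨0,0,1,0⟩
def Kq : ℍ[ℂ] := ⟨0,0,0,1⟩

theorem qre_mul (a b : ℍ[ℂ]) : (a * b).re = a.re * b.re - a.imI * b.imI - a.imJ * b.imJ - a.imK * b.imK := Quaternion.re_mul a b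
theorem qimI_mul (a b : ℍ[ℂ]) : (a * b).imI = a.re * b.imI + a.imI * b.re + a.imJ * b.imK - a.imK * b.imJ := Quaternion.imI_mul a b
theorem qimJ_mul (a b : ℍ[ℂ]) : (a * b).imJ = a.re * b.imJ - a.imI * b.imK + a.imJ * b.re + a.imK * b.imI := Quaternion.imJ_mul a b
theorem qimK_mul (a b : ℍ[ℂ]) : (a * b).imK = a.re * b.imK + a.imI * b.imJ - a.imJ * b.imI + a.imK * b.re := Quaternion.imK_mul a b
theorem qext_iff (a b : ℍ[ℂ]) : a = b ↔ a.re = b.re ∧ a.imI = b.imI ∧ a.imJ = b.imJ ∧ a.imK = b.imK :=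
  Quaternion.ext_iff
theorem qre_neg (a : ℍ[ℂ]) : (-a).re = -a.re := rfl
theorem qimI_neg (a : ℍ[ℂ]) : (-a).imI = -a.imI := rfl
theorem qimJ_neg (a : ℍ[ℂ]) : (-a).imJ = -a.imJ := rfl
theorem qimK_neg (a : ℍ[ℂ]) : (-a).imK = -a.imK := rfl
theorem qre_one : (1 : ℍ[ℂ]).re = 1 := rfl
theorem qimI_one : (1 : ℍ[ℂ]).imI = 0 := rfl
theorem qimJ_one : (1 : ℍ[ℂ]).imJ = 0 := rfl
theorem qimK_one : (1 : ℍ[ℂ]).imK = 0 := rfl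

def qmk (x y z w : ℂ) : ℍ[ℂ] := ⟨x, y, z, w⟩
theorem qmk_re (x y z w : ℂ) : (qmk x y z w).re = x := rfl
theorem qmk_imI (x y z w : ℂ) : (qmk x y z w).imI = y := rfl
theorem qmk_imJ (x y z w : ℂ) : (qmk x y z w).imJ = z := rfl
theorem qmk_imK (x y z w : ℂ) : (qmk x y z w).imK = w := rfl
theorem hatQ_re (q : ℍ[ℂ]) : (hatQ q).re = (starRingEnd ℂ) q.re := rfl
theorem hatQ_imI (q : ℍ[ℂ]) : (hatQ q).imI = (starRingEnd ℂ) q.imI := rfl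
theorem hatQ_imJ (q : ℍ[ℂ]) : (hatQ q).imJ = (starRingEnd ℂ) q.imJ := rfl
theorem hatQ_imK (q : ℍ[ℂ]) : (hatQ q).imK = (starRingEnd ℂ) q.imK := rfl
theorem conjQ_re (q : ℍ[ℂ]) : (conjQ q).re = q.re := rfl
theorem conjQ_imI (q : ℍ[ℂ]) : (conjQ q).imI = -q.imI := rfl
theorem conjQ_imJ (q : ℍ[ℂ]) : (conjQ q).imJ = -q.imJ := rfl
theorem conjQ_imK (q : ℍ[ℂ]) : (conjQ q).imK = -q.imK := rfl

theorem Phi_kernel (p : ℍ[ℂ]) (hp : Hform p p = 1) :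
    (∀ q : ℍ[ℂ], q = -hatQ (conjQ q) → p * q * conjQ (hatQ p) = q) ↔
      p = 1 ∨ p = -1 := by
  constructor
  · intro h
    have h0 := h (qmk Complex.I 0 0 0) (by simp [hatQ_re, hatQ_imI, hatQ_imJ, hatQ_imK, conjQ_re, conjQ_imI, conjQ_imJ, conjQ_imK, qmk_re, qmk_imI, qmk_imJ, qmk_imK, qext_iff, Complex.ext_iff, qre_neg, qimI_neg, qimJ_neg, qimK_neg])
    have hI := h (qmk 0 1 0 0) (by simp [hatQ_re, hatQ_imI, hatQ_imJ, hatQ_imK, conjQ_re, conjQ_imI, conjQ_imJ, conjQ_imK, qmk_re, qmk_imI, qmk_imJ, qmk_imK, qext_iff, Complex.ext_iff, qre_neg, qimI_neg, qimJ_neg, qimK_neg])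
    have hJ := h (qmk 0 0 1 0) (by simp [hatQ_re, hatQ_imI, hatQ_imJ, hatQ_imK, conjQ_re, conjQ_imI, conjQ_imJ, conjQ_imK, qmk_re, qmk_imI, qmk_imJ, qmk_imK, qext_iff, Complex.ext_iff, qre_neg, qimI_neg, qimJ_neg, qimK_neg])
    simp only [hatQ_re, hatQ_imI, hatQ_imJ, hatQ_imK, conjQ_re, conjQ_imI, conjQ_imJ, conjQ_imK, qmk_re, qmk_imI, qmk_imJ, qmk_imK, qext_iff, qre_mul, qimI_mul,
      qimJ_mul, qimK_mul] at h0 hI hJ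
    set a := p.re; set b := p.imI; set c := p.imJ; set d := p.imK
    have E0 : a * (starRingEnd ℂ) a + b * (starRingEnd ℂ) b + c * (starRingEnd ℂ) c
        + d * (starRingEnd ℂ) d = 1 := by
      apply mul_left_cancel₀ Complex.I_ne_zero
      linear_combination h0.1
    have EI : a * (starRingEnd ℂ) a + b * (starRingEnd ℂ) b - c * (starRingEnd ℂ) c
        - d * (starRingEnd ℂ) d = 1 := by linear_combination hI.2.1
    have EJ : a * (starRingEnd ℂ) a - b * (starRingEnd ℂ) b + c * (starRingEnd ℂ) c
        - d * (starRingEnd ℂ) d = 1 := by linear_combination hJ.2.2.1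
    have hcd : (Complex.normSq c : ℂ) + (Complex.normSq d : ℂ) = 0 := by
      rw [← Complex.mul_conj, ← Complex.mul_conj]
      linear_combination (E0 - EI) / 2
    have hbd : (Complex.normSq b : ℂ) + (Complex.normSq d : ℂ) = 0 := by
      rw [← Complex.mul_conj, ← Complex.mul_conj]
      linear_combination (E0 - EJ) / 2
    have hcd' : Complex.normSq c + Complex.normSq d = 0 := by exact_mod_cast hcd
    have hbd' : Complex.normSq b + Complex.normSq d = 0 := by exact_mod_cast hbd
    have nb := Complex.normSq_nonneg b
    have nc := Complex.normSq_nonneg c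
    have nd := Complex.normSq_nonneg d
    have hc : c = 0 := Complex.normSq_eq_zero.mp (by linarith)
    have hd : d = 0 := Complex.normSq_eq_zero.mp (by linarith)
    have hb : b = 0 := Complex.normSq_eq_zero.mp (by linarith)
    have hpa : a * a = 1 := by
      simp only [Hform] at hp
      linear_combination hp - b * hb - c * hc - d * hd
    have hfac : (a - 1) * (a + 1) = 0 := by linear_combination hpa
    rcases mul_eq_zero.mp hfac with h' | h'
    · left
      have ha : a = 1 := by linear_combination h'
      simp only [qext_iff, qre_one, qimI_one,
        qimJ_one, qimK_one]
      exact ⟨ha, hb, hc, hd⟩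
    · right
      have ha : a = -1 := by linear_combination h'
      simp only [qext_iff, qre_neg, qimI_neg,
        qimJ_neg, qimK_neg, qre_one, qimI_one,
        qimJ_one, qimK_one, neg_zero]
      exact ⟨ha, hb, hc, hd⟩
  · rintro (rfl | rfl) q hq <;>
      simp [hatQ_re, hatQ_imI, hatQ_imJ, hatQ_imK, conjQ_re, conjQ_imI, conjQ_imJ, conjQ_imK, qmk_re, qmk_imI, qmk_imJ, qmk_imK, qre_neg, qimI_neg, qimJ_neg, qimK_neg, qre_one, qimI_one, qimJ_one, qimK_one, qext_iff, qre_mul, qimI_mul,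
        qimJ_mul, qimK_mul]
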